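/- Let $(C_n)_{n\in\omega}$ be a sequence of pairwise disjoint finite nonempty subsets of $\omega$ with $|C_n| \le |C_{n+1}|$ for all $n$ and $|C_n| \to \infty$, let $\mathcal{G} = \{g \in \omega^\omega : \forall n,\ g(n) \in C_n\}$, and let $p$ be a free ultrafilter on $\omega$. Then the set $Z_p = \{p\text{-}\lim g : g \in \mathcal{G}\}$ has cardinality $\mathfrak{c} = 2^{\aleph_0}$. -/

import Mathlib

open Filter Topology

lemma sum_bits_lt (f : ℕ → Bool) (k : ℕ) :
    (∑ j ∈ Finset.range k, (f j).toNat * 2^j) < 2^k := by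
  induction k with
  | zero => simp
  | succ k ih =>
    rw [Finset.sum_range_succ, pow_succ]
    have : (f k).toNat ≤ 1 := Bool.toNat_le _
    have h2 : (f k).toNat * 2^k ≤ 2^k := by
      calc (f k).toNat * 2^k ≤ 1 * 2^k := Nat.mul_le_mul_right _ this
        _ = 2^k := one_mul _
    omega

lemma testBit_sum_bits (f : ℕ → Bool) {k i : ℕ} (h : i < k) :
    Nat.testBit (∑ j ∈ Finset.range k, (f j).toNat * 2^j) i = f i := by
  induction k with
  | zero => omega
  | succ k ih =>
    rw [Finset.sum_range_succ, add_comm, mul_comm,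
      Nat.testBit_two_pow_mul_add _ (sum_bits_lt f k)]
    rcases lt_or_ge i k with hik | hik
    · rw [if_pos hik, ih hik]
    · have : i = k := by omega
      subst this
      rw [if_neg (lt_irrefl i), Nat.sub_self]
      cases f i <;> simp

noncomputable def auxE (C : ℕ → Set ℕ) (hfin : ∀ n, (C n).Finite) (n : ℕ) :
    Fin ((C n).ncard) ≃o {x // x ∈ (hfin n).toFinset} :=
  (hfin n).toFinset.orderIsoOfFin ((Set.ncard_eq_toFinset_card (C n) (hfin n)).symm)

open Classical in
noncomputable def auxIdx (C : ℕ → Set ℕ) (hfin : ∀ n, (C n).Finite) (m : ℕ) : ℕ :=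
  if h : ∃ n, m ∈ C n then
    (((auxE C hfin h.choose).symm
      ⟨m, (hfin h.choose).mem_toFinset.mpr h.choose_spec⟩ : Fin _) : ℕ)
  else 0

noncomputable def auxJ (C : ℕ → Set ℕ) (A : ℕ → Bool) (n : ℕ) : ℕ :=
  ∑ j ∈ Finset.range (Nat.log 2 (C n).ncard), (A j).toNat * 2 ^ j

lemma auxJ_lt (C : ℕ → Set ℕ) (hfin : ∀ n, (C n).Finite) (hne : ∀ n, (C n).Nonempty)
    (A : ℕ → Bool) (n : ℕ) : auxJ C A n < (C n).ncard :=
  lt_of_lt_of_le (sum_bits_lt A _)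
    (Nat.pow_log_le_self 2 ((Set.ncard_pos (hfin n)).mpr (hne n)).ne')

noncomputable def auxG (C : ℕ → Set ℕ) (hfin : ∀ n, (C n).Finite) (hne : ∀ n, (C n).Nonempty)
    (A : ℕ → Bool) (n : ℕ) : ℕ :=
  ((auxE C hfin n ⟨auxJ C A n, auxJ_lt C hfin hne A n⟩ : {x // x ∈ (hfin n).toFinset}) : ℕ)

lemma auxG_mem (C : ℕ → Set ℕ) (hfin : ∀ n, (C n).Finite) (hne : ∀ n, (C n).Nonempty)
    (A : ℕ → Bool) (n : ℕ) : auxG C hfin hne A n ∈ C n :=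
  (hfin n).mem_toFinset.mp (auxE C hfin n ⟨auxJ C A n, auxJ_lt C hfin hne A n⟩).2

lemma auxIdx_apply (C : ℕ → Set ℕ) (hfin : ∀ n, (C n).Finite)
    (hdisj : ∀ m n, m ≠ n → Disjoint (C m) (C n)) (n : ℕ) (j : Fin ((C n).ncard)) :
    auxIdx C hfin ((auxE C hfin n j : {x // x ∈ (hfin n).toFinset}) : ℕ) = (j : ℕ) := by
  set m : ℕ := ((auxE C hfin n j : {x // x ∈ (hfin n).toFinset}) : ℕ) with hm
  have hmem : m ∈ C n := (hfin n).mem_toFinset.mp (auxE C hfin n j).2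
  have hex : ∃ k, m ∈ C k := ⟨n, hmem⟩
  have hkn : hex.choose = n := by
    by_contra hne'
    exact (hdisj hex.choose n hne').ne_of_mem hex.choose_spec hmem rfl
  have key : ∀ (k) (hk : m ∈ C k), k = n →
      (((auxE C hfin k).symm ⟨m, (hfin k).mem_toFinset.mpr hk⟩ : Fin _) : ℕ) = (j : ℕ) := by
    rintro k hk rfl
    have : (⟨m, (hfin k).mem_toFinset.mpr hk⟩ : {x // x ∈ (hfin k).toFinset}) =
        auxE C hfin k j := Subtype.ext rfl
    rw [this, OrderIso.symm_apply_apply]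
  rw [auxIdx, dif_pos hex]
  exact key hex.choose hex.choose_spec hkn

lemma auxIdx_auxG (C : ℕ → Set ℕ) (hfin : ∀ n, (C n).Finite) (hne : ∀ n, (C n).Nonempty)
    (hdisj : ∀ m n, m ≠ n → Disjoint (C m) (C n)) (A : ℕ → Bool) (n : ℕ) :
    auxIdx C hfin (auxG C hfin hne A n) = auxJ C A n :=
  auxIdx_apply C hfin hdisj n ⟨auxJ C A n, auxJ_lt C hfin hne A n⟩

/-- If moreover `|C n| ≤ |C (n+1)|` and `|C n| → ∞`, then `Z_p` has
cardinality continuum. -/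
theorem stmt1 (C : ℕ → Set ℕ) (hfin : ∀ n, (C n).Finite)
    (hne : ∀ n, (C n).Nonempty)
    (hdisj : ∀ m n, m ≠ n → Disjoint (C m) (C n))
    (hmono : ∀ n, (C n).ncard ≤ (C (n+1)).ncard)
    (hlim : Tendsto (fun n => (C n).ncard) atTop atTop)
    (p : Ultrafilter ℕ) (hp : ∀ a, p ≠ pure a) :
    Cardinal.mk {x : Ultrafilter ℕ // ∃ g : ℕ → ℕ, (∀ n, g n ∈ C n) ∧
      Tendsto (fun n => (pure (g n) : Ultrafilter ℕ)) ↑p (𝓝 x)} = Cardinal.continuum := by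
  classical
  set P : Ultrafilter ℕ → Prop := fun x => ∃ g : ℕ → ℕ, (∀ n, g n ∈ C n) ∧
      Tendsto (fun n => (pure (g n) : Ultrafilter ℕ)) ↑p (𝓝 x) with hP
  -- p contains all sets that are eventually true
  have hatTop : ∀ s : Set ℕ, (∀ᶠ n in atTop, n ∈ s) → s ∈ p := by
    intro s hs
    rw [← Nat.cofinite_eq_atTop, eventually_cofinite] at hs
    by_contra h
    have hsc : sᶜ ∈ p := Ultrafilter.compl_mem_iff_notMem.mpr h
    obtain ⟨a, -, ha⟩ := Ultrafilter.eq_pure_of_finite_mem hs hsc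
    exact hp a ha
  -- the limit of pure ∘ g along p is p.map g
  have htend : ∀ g : ℕ → ℕ, Tendsto (fun n => (pure (g n) : Ultrafilter ℕ)) ↑p
      (𝓝 (p.map g)) := by
    intro g
    have h1 : Tendsto g ↑p ↑(p.map g) := by
      rw [Ultrafilter.coe_map]; exact tendsto_map
    exact (Ultrafilter.tendsto_pure_self (p.map g)).comp h1
  apply le_antisymm
  · -- upper bound
    have hinj : Function.Injective
        (fun x : {x : Ultrafilter ℕ // P x} => x.2.choose) := by
      intro x y hxy
      have hxy' : x.2.choose = y.2.choose := hxy
      have hx := x.2.choose_spec.2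
      have hy := y.2.choose_spec.2
      rw [hxy'] at hx
      exact Subtype.ext (tendsto_nhds_unique hx hy)
    calc Cardinal.mk {x : Ultrafilter ℕ // P x} ≤ Cardinal.mk (ℕ → ℕ) :=
          Cardinal.mk_le_of_injective hinj
      _ = Cardinal.continuum := by
          rw [Cardinal.mk_arrow]
          simp [Cardinal.aleph0_power_aleph0]
  · -- lower bound
    set F : (ℕ → Bool) → {x : Ultrafilter ℕ // P x} := fun A =>
      ⟨p.map (auxG C hfin hne A), auxG C hfin hne A, auxG_mem C hfin hne A,
        htend (auxG C hfin hne A)⟩ with hF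
    have hkey : ∀ (A : ℕ → Bool) (i : ℕ),
        ({m | Nat.testBit (auxIdx C hfin m) i = true} ∈ p.map (auxG C hfin hne A)) ↔
          A i = true := by
      intro A i
      have hev : {n | i < Nat.log 2 (C n).ncard} ∈ p := by
        apply hatTop
        have : ∀ᶠ n in atTop, 2 ^ (i + 1) ≤ (C n).ncard := hlim.eventually_ge_atTop _
        filter_upwards [this] with n hn
        have hcne : (C n).ncard ≠ 0 := ((Set.ncard_pos (hfin n)).mpr (hne n)).ne'
        have := (Nat.le_log_iff_pow_le one_lt_two hcne).mpr hn
        omega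
      have hbit : ∀ n, i < Nat.log 2 (C n).ncard →
          Nat.testBit (auxIdx C hfin (auxG C hfin hne A n)) i = A i := by
        intro n hn
        rw [auxIdx_auxG C hfin hne hdisj, auxJ, testBit_sum_bits A hn]
      cases hAi : A i with
      | true =>
        simp only [iff_true]
        rw [Ultrafilter.mem_map]
        apply mem_of_superset hev
        intro n hn
        simp only [Set.mem_preimage, Set.mem_setOf_eq]
        rw [hbit n hn, hAi]
      | false =>
        constructor
        · intro hmem
          exfalso
          have hcomp : {m | Nat.testBit (auxIdx C hfin m) i = true}ᶜ ∈
              p.map (auxG C hfin hne A) := by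
            rw [Ultrafilter.mem_map]
            apply mem_of_superset hev
            intro n hn
            simp only [Set.mem_preimage, Set.mem_compl_iff, Set.mem_setOf_eq]
            rw [hbit n hn, hAi]
            simp
          exact (Ultrafilter.compl_mem_iff_notMem.mp hcomp) hmem
        · intro h
          simp at h
    have hFinj : Function.Injective F := by
      intro A B hAB
      have hmap : p.map (auxG C hfin hne A) = p.map (auxG C hfin hne B) :=
        congrArg Subtype.val hAB
      funext i
      have h2 : (A i = true) ↔ (B i = true) := by
        rw [← hkey A i, ← hkey B i, hmap]
      cases hA : A i <;> cases hB : B i <;> simp_all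
    calc Cardinal.continuum = Cardinal.mk (ℕ → Bool) := by
          rw [Cardinal.mk_arrow]
          simp [Cardinal.two_power_aleph0]
      _ ≤ Cardinal.mk {x : Ultrafilter ℕ // P x} := Cardinal.mk_le_of_injective hFinj
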